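/- Let R be a commutative ring with ℚ ⊆ R and V an R-module. For φ ∈ Sym V and r ∈ ℕ, the projection onto symmetric degree r satisfies pr_{Sym^r V}(φ) = (1/r!) · pr_V(φ₍₁₎) ∨ ⋯ ∨ pr_V(φ₍ᵣ₎), where φ₍₁₎ ⊗ ⋯ ⊗ φ₍ᵣ₎ denotes the iterated shuffle coproduct and pr_V : Sym V → V the projection onto degree 1. -/

import Mathlib

open TensorProduct

/-! ### The symmetric algebra of a module

Mathlib does not yet have the symmetric algebra, so we construct it as the
quotient of the tensor algebra by the commutativity relation. -/

/-- The relation on the tensor algebra whose quotient is the symmetric algebra. -/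
inductive SymRel (R : Type*) [CommRing R] (V : Type*) [AddCommGroup V] [Module R V] :
    TensorAlgebra R V → TensorAlgebra R V → Prop
  | mul_comm (a b : TensorAlgebra R V) : SymRel R V (a * b) (b * a)

/-- The symmetric algebra `Sym V` of an `R`-module `V`. -/
abbrev SymmAlg (R : Type*) [CommRing R] (V : Type*) [AddCommGroup V] [Module R V] : Type _ :=
  RingQuot (SymRel R V)

variable (R : Type*) [CommRing R] (V : Type*) [AddCommGroup V] [Module R V]

noncomputable instance : CommRing (SymmAlg R V) :=
  { (inferInstance : Ring (RingQuot (SymRel R V))) with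
    mul_comm := by
      intro a b
      obtain ⟨x, rfl⟩ := RingQuot.mkRingHom_surjective (SymRel R V) a
      obtain ⟨y, rfl⟩ := RingQuot.mkRingHom_surjective (SymRel R V) b
      rw [← map_mul, ← map_mul, RingQuot.mkRingHom_rel (SymRel.mul_comm x y)] }

/-- The canonical inclusion `V →ₗ Sym V` of the generators. -/
noncomputable def ιS : V →ₗ[R] SymmAlg R V :=
  (RingQuot.mkAlgHom R (SymRel R V)).toLinearMap ∘ₗ TensorAlgebra.ι R

variable {R V}



/-- `sweedlerProd Δ p₁ p₀ r` is the map `φ ↦ p₁(φ₍₁₎) ∨ ⋯ ∨ p₁(φ₍ᵣ₎)` (with a trailing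
counit factor `p₀(φ₍ᵣ₊₁₎)` which is harmless by counitality), defined by iterating the
coproduct `Δ`. -/
noncomputable def sweedlerProd {S : Type*} [CommRing S] [Algebra R S]
    (Δ : S →ₗ[R] S ⊗[R] S) (p₁ p₀ : S →ₗ[R] S) : ℕ → (S →ₗ[R] S)
  | 0 => p₀
  | r + 1 => LinearMap.mul' R S ∘ₗ TensorProduct.map p₁ (sweedlerProd Δ p₁ p₀ r) ∘ₗ Δ


section Auxiliary

variable {R : Type*} [CommRing R] {V : Type*} [AddCommGroup V] [Module R V]

lemma prodTmulOne {ι : Type*} (t : Finset ι) (f : ι → SymmAlg R V) :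
    (∏ j ∈ t, (f j ⊗ₜ[R] (1 : SymmAlg R V))) = (∏ j ∈ t, f j) ⊗ₜ[R] 1 := by
  classical
  induction t using Finset.cons_induction with
  | empty => simp [Algebra.TensorProduct.one_def]
  | cons a t ha ih =>
      rw [Finset.prod_cons, Finset.prod_cons, ih, Algebra.TensorProduct.tmul_mul_tmul, mul_one]

lemma oneTmulProd {ι : Type*} (t : Finset ι) (f : ι → SymmAlg R V) :
    (∏ j ∈ t, ((1 : SymmAlg R V) ⊗ₜ[R] f j)) = (1 : SymmAlg R V) ⊗ₜ[R] (∏ j ∈ t, f j) := by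
  classical
  induction t using Finset.cons_induction with
  | empty => simp [Algebra.TensorProduct.one_def]
  | cons a t ha ih =>
      rw [Finset.prod_cons, Finset.prod_cons, ih, Algebra.TensorProduct.tmul_mul_tmul, one_mul]

lemma prod_finset_eq_fin {s : ℕ} (t : Finset (Fin s)) (f : Fin s → SymmAlg R V) :
    ∏ j ∈ t, f j = ∏ i : Fin t.card, f (t.orderIsoOfFin rfl i) := by
  rw [← Finset.prod_attach t f]
  exact (Fintype.prod_equiv (t.orderIsoOfFin rfl).toEquiv
    (fun i => f (t.orderIsoOfFin rfl i)) (fun j => f j) (fun i => rfl)).symm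

open Pointwise in
lemma span_monomials :
    Submodule.span R {φ : SymmAlg R V | ∃ (s : ℕ) (x : Fin s → V), φ = ∏ j, ιS R V (x j)} = ⊤ := by
  set S : Set (SymmAlg R V) := {φ | ∃ (s : ℕ) (x : Fin s → V), φ = ∏ j, ιS R V (x j)} with hS
  have hmulS : S * S ⊆ S := by
    rintro _ ⟨_, ⟨s, x, rfl⟩, _, ⟨t, y, rfl⟩, rfl⟩
    refine ⟨s + t, Fin.append x y, ?_⟩
    rw [Fin.prod_univ_add]
    congr 1 <;> exact Finset.prod_congr rfl (by simp [Fin.append_left, Fin.append_right])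
  have key : ∀ p ∈ Submodule.span R S, ∀ q ∈ Submodule.span R S, p * q ∈ Submodule.span R S := by
    intro p hp q hq
    have h := Submodule.mul_mem_mul hp hq
    rw [Submodule.span_mul_span] at h
    exact Submodule.span_le.2 (Set.Subset.trans hmulS Submodule.subset_span) h
  rw [Submodule.eq_top_iff']
  intro a
  obtain ⟨x, rfl⟩ := RingQuot.mkAlgHom_surjective R (SymRel R V) a
  induction x using TensorAlgebra.induction with
  | algebraMap r =>
      rw [AlgHom.commutes]
      have h1 : (1 : SymmAlg R V) ∈ S := ⟨0, Fin.elim0, by simp⟩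
      simpa [Algebra.algebraMap_eq_smul_one] using
        Submodule.smul_mem _ r (Submodule.subset_span h1)
  | ι v =>
      refine Submodule.subset_span ⟨1, fun _ => v, ?_⟩
      simp [ιS]
  | mul a b ha hb => rw [map_mul]; exact key _ ha _ hb
  | add a b ha hb => rw [map_add]; exact Submodule.add_mem _ ha hb

lemma sweedler_on_monomial
    (Δ : SymmAlg R V →ₐ[R] SymmAlg R V ⊗[R] SymmAlg R V)
    (hΔ : ∀ v : V, Δ (ιS R V v) = 1 ⊗ₜ[R] ιS R V v + ιS R V v ⊗ₜ[R] 1)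
    (P : ℕ → (SymmAlg R V →ₗ[R] SymmAlg R V))
    (hP : ∀ (r : ℕ) {s : ℕ} (t : Finset (Fin s)) (x : Fin s → V),
      P r (∏ j ∈ t, ιS R V (x j)) = if t.card = r then ∏ j ∈ t, ιS R V (x j) else 0)
    (r : ℕ) {s : ℕ} (u : Finset (Fin s)) (x : Fin s → V) :
    sweedlerProd Δ.toLinearMap (P 1) (P 0) r (∏ j ∈ u, ιS R V (x j)) =
      if u.card = r then (r.factorial : R) • ∏ j ∈ u, ιS R V (x j) else 0 := by
  induction r generalizing u with
  | zero => simpa [sweedlerProd] using hP 0 u x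
  | succ r ih =>
    have hΔm : Δ (∏ j ∈ u, ιS R V (x j)) =
        ∑ t ∈ u.powerset,
          (∏ j ∈ t, ιS R V (x j)) ⊗ₜ[R] (∏ j ∈ u \ t, ιS R V (x j)) := by
      rw [map_prod]
      have h1 : ∀ j ∈ u, Δ (ιS R V (x j)) =
          ((Algebra.TensorProduct.includeLeft :
              SymmAlg R V →ₐ[R] SymmAlg R V ⊗[R] SymmAlg R V) (ιS R V (x j))) +
          ((Algebra.TensorProduct.includeRight :
              SymmAlg R V →ₐ[R] SymmAlg R V ⊗[R] SymmAlg R V) (ιS R V (x j))) := by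
        intro j _
        rw [hΔ]
        simp [Algebra.TensorProduct.includeLeft_apply,
          Algebra.TensorProduct.includeRight_apply, add_comm]
      rw [Finset.prod_congr rfl h1, Finset.prod_add]
      refine Finset.sum_congr rfl fun t _ => ?_
      simp only [Algebra.TensorProduct.includeLeft_apply,
        Algebra.TensorProduct.includeRight_apply]
      rw [prodTmulOne t (fun j => ιS R V (x j)), oneTmulProd (u \ t) (fun j => ιS R V (x j)),
        Algebra.TensorProduct.tmul_mul_tmul, mul_one, one_mul]
    simp only [sweedlerProd, LinearMap.comp_apply, AlgHom.toLinearMap_apply, hΔm, map_sum,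
      TensorProduct.map_tmul, LinearMap.mul'_apply]
    have hterm : ∀ t ∈ u.powerset,
        P 1 (∏ j ∈ t, ιS R V (x j)) *
          sweedlerProd Δ.toLinearMap (P 1) (P 0) r (∏ j ∈ u \ t, ιS R V (x j)) =
        (if t.card = 1 then ∏ j ∈ t, ιS R V (x j) else 0) *
          (if (u \ t).card = r then (r.factorial : R) • ∏ j ∈ u \ t, ιS R V (x j) else 0) := by
      intro t _
      rw [hP, ih]
    rw [Finset.sum_congr rfl hterm]
    rw [← Finset.sum_filter_of_ne (p := fun t => t.card = 1)
      (fun t _ hne => by by_contra h; simp [h] at hne)]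
    rw [← Finset.powersetCard_eq_filter, Finset.powersetCard_one, Finset.sum_map]
    simp only [Function.Embedding.coeFn_mk, Finset.card_singleton, if_true,
      Finset.prod_singleton, Finset.sdiff_singleton_eq_erase]
    by_cases hcard : u.card = r + 1
    · have hc : ∀ a ∈ u, (u.erase a).card = r := fun a ha => by
        rw [Finset.card_erase_of_mem ha, hcard]; omega
      have h2 : ∀ a ∈ u, ιS R V (x a) *
          (if (u.erase a).card = r then (r.factorial : R) • ∏ j ∈ u.erase a, ιS R V (x j) else 0)
          = (r.factorial : R) • ∏ j ∈ u, ιS R V (x j) := by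
        intro a ha
        rw [if_pos (hc a ha), mul_smul_comm]
        congr 1
        exact Finset.mul_prod_erase u (fun j => ιS R V (x j)) ha
      rw [Finset.sum_congr rfl h2, if_pos hcard, Finset.sum_const, hcard,
        ← Nat.cast_smul_eq_nsmul R, smul_smul]
      congr 1
      push_cast [Nat.factorial_succ]
      ring
    · rw [if_neg hcard]
      refine Finset.sum_eq_zero fun a ha => ?_
      rw [if_neg, mul_zero]
      have hpos : 0 < u.card := Finset.card_pos.2 ⟨a, ha⟩
      rw [Finset.card_erase_of_mem ha]
      omega

end Auxiliary

/-- **Projections onto symmetric degree via the shuffle coproduct.**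
Let `Δ` be the shuffle coproduct of `Sym V` and `P r` the canonical projection onto
the homogeneous component `Sym^r V` (characterized by its values on products of
generators).  Then for every `φ ∈ Sym V`,
`pr_{Sym^r V}(φ) = (1/r!) · pr_V(φ₍₁₎) ∨ ⋯ ∨ pr_V(φ₍ᵣ₎)`,
where the right-hand side is the `r`-fold iterated Sweedler product of the degree-one
projections (`P 1` realises `pr_V` inside `Sym V`, and the trailing factor `P 0` is the
counit, which disappears by counitality). -/
theorem proj_symPow_eq_sweedler
    {R : Type*} [CommRing R] [Algebra ℚ R]
    {V : Type*} [AddCommGroup V] [Module R V]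
    (Δ : SymmAlg R V →ₐ[R] SymmAlg R V ⊗[R] SymmAlg R V)
    (hΔ : ∀ v : V, Δ (ιS R V v) = 1 ⊗ₜ[R] ιS R V v + ιS R V v ⊗ₜ[R] 1)
    (P : ℕ → (SymmAlg R V →ₗ[R] SymmAlg R V))
    (hP : ∀ (r s : ℕ) (x : Fin s → V),
      P r (∏ j, ιS R V (x j)) = if s = r then ∏ j, ιS R V (x j) else 0)
    (r : ℕ) (φ : SymmAlg R V) :
    P r φ = algebraMap ℚ R ((r.factorial : ℚ)⁻¹) •
      sweedlerProd Δ.toLinearMap (P 1) (P 0) r φ := by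
  classical
  have hP' : ∀ (r : ℕ) {s : ℕ} (t : Finset (Fin s)) (x : Fin s → V),
      P r (∏ j ∈ t, ιS R V (x j)) = if t.card = r then ∏ j ∈ t, ιS R V (x j) else 0 := by
    intro r s t x
    rw [prod_finset_eq_fin t (fun j => ιS R V (x j)),
      hP r t.card (fun i => x (t.orderIsoOfFin rfl i))]
  have hmono : ∀ {s : ℕ} (x : Fin s → V),
      P r (∏ j, ιS R V (x j)) = algebraMap ℚ R ((r.factorial : ℚ)⁻¹) •
        sweedlerProd Δ.toLinearMap (P 1) (P 0) r (∏ j, ιS R V (x j)) := by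
    intro s x
    have h1 := sweedler_on_monomial Δ hΔ P hP' r (Finset.univ : Finset (Fin s)) x
    have hcard : (Finset.univ : Finset (Fin s)).card = s := by simp
    rw [hcard] at h1
    rw [hP r s x, h1]
    by_cases hs : s = r
    · rw [if_pos hs, if_pos hs, smul_smul]
      have hfac : (r.factorial : R) = algebraMap ℚ R (r.factorial : ℚ) := by
        rw [map_natCast]
      rw [hfac, ← map_mul, inv_mul_cancel₀ (by exact_mod_cast r.factorial_ne_zero),
        map_one, one_smul]
    · rw [if_neg hs, if_neg hs, smul_zero]
  have hφ : φ ∈ Submodule.span R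
      {ψ : SymmAlg R V | ∃ (s : ℕ) (x : Fin s → V), ψ = ∏ j, ιS R V (x j)} := by
    rw [span_monomials]; trivial
  induction hφ using Submodule.span_induction with
  | mem ψ hψ => obtain ⟨s, x, rfl⟩ := hψ; exact hmono x
  | zero => simp
  | add a b _ _ ha hb => rw [map_add, map_add, smul_add, ha, hb]
  | smul c a _ ha => rw [map_smul, map_smul, ha, smul_comm]
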